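/- Let (X_n)_{n∈ℤ} be a stationary integer-valued sequence with E[|X_0|] < ∞, and for i ∈ ℤ let C(i) = {j ∈ ℤ : R_X^a(j) = R_X^b(i) for some a, b ≥ 0} be the record component of i. Then P[C(0) is finite] = P[C(n) is finite for all n ≥ 1] = P[C(n) is finite for all n ≤ −1]. -/
import Mathlib


attribute [local instance] Classical.propDecidable

/-- The record map of an integer sequence: `n` is sent to the least integer `j > n`
with `∑_{l=n}^{j-1} x l ≥ 0` if such `j` exists, and to `n` otherwise. -/
noncomputable def recordMap (x : ℤ → ℤ) (n : ℤ) : ℤ :=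
  if ∃ j : ℤ, n < j ∧ 0 ≤ ∑ l ∈ Finset.Ico n j, x l then
    sInf {j : ℤ | n < j ∧ 0 ≤ ∑ l ∈ Finset.Ico n j, x l}
  else n

open MeasureTheory ProbabilityTheory

/-- `p` is a fixed point of the record map: all forward partial sums from `p` are negative. -/
def RMFix (x : ℤ → ℤ) (p : ℤ) : Prop :=
  ∀ j : ℤ, p < j → ∑ l ∈ Finset.Ico p j, x l < 0

lemma recordMap_mem {x : ℤ → ℤ} {n : ℤ}
    (h : ∃ j : ℤ, n < j ∧ 0 ≤ ∑ l ∈ Finset.Ico n j, x l) :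
    n < recordMap x n ∧ 0 ≤ ∑ l ∈ Finset.Ico n (recordMap x n), x l := by
  have hbdd : BddBelow {j : ℤ | n < j ∧ 0 ≤ ∑ l ∈ Finset.Ico n j, x l} :=
    ⟨n, fun j hj => hj.1.le⟩
  have := Int.csInf_mem (s := {j : ℤ | n < j ∧ 0 ≤ ∑ l ∈ Finset.Ico n j, x l}) h hbdd
  rw [recordMap, if_pos h]
  exact this

lemma recordMap_min {x : ℤ → ℤ} {n m : ℤ}
    (h : ∃ j : ℤ, n < j ∧ 0 ≤ ∑ l ∈ Finset.Ico n j, x l)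
    (hm : n < m) (hm2 : 0 ≤ ∑ l ∈ Finset.Ico n m, x l) :
    recordMap x n ≤ m := by
  have hbdd : BddBelow {j : ℤ | n < j ∧ 0 ≤ ∑ l ∈ Finset.Ico n j, x l} :=
    ⟨n, fun j hj => hj.1.le⟩
  rw [recordMap, if_pos h]
  exact csInf_le hbdd ⟨hm, hm2⟩

lemma le_recordMap (x : ℤ → ℤ) (n : ℤ) : n ≤ recordMap x n := by
  by_cases h : ∃ j : ℤ, n < j ∧ 0 ≤ ∑ l ∈ Finset.Ico n j, x l
  · exact (recordMap_mem h).1.le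
  · rw [recordMap, if_neg h]

lemma lt_recordMap_of_not_fix {x : ℤ → ℤ} {n : ℤ} (h : ¬ RMFix x n) :
    n < recordMap x n := by
  rw [RMFix] at h
  push_neg at h
  obtain ⟨j, hj1, hj2⟩ := h
  exact (recordMap_mem ⟨j, hj1, hj2⟩).1

lemma recordMap_le_of_fix {x : ℤ → ℤ} {q m : ℤ} (hq : RMFix x q) (hm : m ≤ q) :
    recordMap x m ≤ q := by
  by_cases h : ∃ j : ℤ, m < j ∧ 0 ≤ ∑ l ∈ Finset.Ico m j, x l
  · by_contra hlt
    push_neg at hlt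
    obtain ⟨hmr, hsum⟩ := recordMap_mem h
    -- q < recordMap x m, m ≤ q
    have hsum1 : ∑ l ∈ Finset.Ico m q, x l ≤ 0 := by
      rcases eq_or_lt_of_le hm with rfl | hmq
      · simp
      · by_contra hpos
        push_neg at hpos
        exact absurd (recordMap_min h hmq hpos.le) (not_le.mpr hlt)
    have hsum2 : ∑ l ∈ Finset.Ico q (recordMap x m), x l < 0 := hq _ hlt
    have hsplit : ∑ l ∈ Finset.Ico m q, x l + ∑ l ∈ Finset.Ico q (recordMap x m), x l
        = ∑ l ∈ Finset.Ico m (recordMap x m), x l := by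
      rw [← Finset.sum_union (Finset.Ico_disjoint_Ico_consecutive m q (recordMap x m)),
        Finset.Ico_union_Ico_eq_Ico hm hlt.le]
    omega
  · rw [recordMap, if_neg h]; exact hm

lemma iterate_le_of_fix {x : ℤ → ℤ} {q m : ℤ} (hq : RMFix x q) (hm : m ≤ q) (a : ℕ) :
    (recordMap x)^[a] m ≤ q := by
  induction a with
  | zero => simpa
  | succ a ih =>
    rw [Function.iterate_succ_apply']
    exact recordMap_le_of_fix hq ih

lemma le_iterate (x : ℤ → ℤ) (m : ℤ) (a : ℕ) : m ≤ (recordMap x)^[a] m := by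
  induction a with
  | zero => simp
  | succ a ih =>
    rw [Function.iterate_succ_apply']
    exact ih.trans (le_recordMap x _)

/-- If the record map has no fixed points, every record component is infinite. -/
lemma component_infinite {x : ℤ → ℤ} (h : ∀ p : ℤ, ¬ RMFix x p) (n : ℤ) :
    {j : ℤ | ∃ a b : ℕ, (recordMap x)^[a] j = (recordMap x)^[b] n}.Infinite := by
  have hmono : StrictMono (fun b : ℕ => (recordMap x)^[b] n) := by
    apply strictMono_nat_of_lt_succ
    intro b
    rw [Function.iterate_succ_apply']
    exact lt_recordMap_of_not_fix (h _)
  exact Set.infinite_of_injective_forall_mem (f := fun b : ℕ => (recordMap x)^[b] n)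
    hmono.injective (fun b => ⟨0, b, rfl⟩)

/-- If there are record-map fixed points on both sides of `n`, the component of `n`
is finite. -/
lemma component_finite {x : ℤ → ℤ} {n q q' : ℤ} (hq : RMFix x q) (hn : n ≤ q)
    (hq' : RMFix x q') (hq'n : q' < n) :
    {j : ℤ | ∃ a b : ℕ, (recordMap x)^[a] j = (recordMap x)^[b] n}.Finite := by
  apply Set.Finite.subset (Set.finite_Icc q' q)
  rintro j ⟨a, b, hab⟩
  constructor
  · by_contra hj
    push_neg at hj
    have h1 : (recordMap x)^[a] j ≤ q' := iterate_le_of_fix hq' hj.le a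
    have h2 : n ≤ (recordMap x)^[b] n := le_iterate x n b
    omega
  · have h1 : (recordMap x)^[b] n ≤ q := iterate_le_of_fix hq hn b
    have h2 : j ≤ (recordMap x)^[a] j := le_iterate x j a
    omega

/-- Shift reindexing of interval sums. -/
lemma sum_Ico_shift (x : ℤ → ℤ) (p j k : ℤ) :
    ∑ l ∈ Finset.Ico p j, x (l + k) = ∑ l ∈ Finset.Ico (p + k) (j + k), x l := by
  rw [← Finset.map_add_right_Ico, Finset.sum_map]
  rfl

lemma rmfix_shift (x : ℤ → ℤ) (k p : ℤ) :
    RMFix (fun n => x (n + k)) p ↔ RMFix x (p + k) := by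
  constructor
  · intro h j hj
    have := h (j - k) (by omega)
    rwa [sum_Ico_shift, sub_add_cancel] at this
  · intro h j hj
    rw [sum_Ico_shift]
    exact h (j + k) (by omega)

lemma rmfix_measurableSet (p : ℤ) : MeasurableSet {x : ℤ → ℤ | RMFix x p} := by
  have : {x : ℤ → ℤ | RMFix x p}
      = ⋂ j ∈ Set.Ioi p, {x : ℤ → ℤ | ∑ l ∈ Finset.Ico p j, x l < 0} := by
    ext x; simp [RMFix, Set.mem_iInter]
  rw [this]
  refine MeasurableSet.biInter (Set.to_countable _) fun j _ => ?_
  have hmeas : Measurable fun x : ℤ → ℤ => ∑ l ∈ Finset.Ico p j, x l :=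
    Finset.measurable_sum _ fun l _ => measurable_pi_apply l
  exact measurableSet_lt hmeas measurable_const

theorem stationary_record_component_finite_prob
    {Ω : Type*} [MeasureSpace Ω] [IsProbabilityMeasure (ℙ : Measure Ω)]
    (X : ℤ → Ω → ℤ) (hmeas : ∀ n, Measurable (X n))
    (hstat : ∀ k : ℤ, Measure.map (fun ω => fun n : ℤ => X (n + k) ω) ℙ =
      Measure.map (fun ω => fun n : ℤ => X n ω) ℙ)
    (hint : Integrable (fun ω => (X 0 ω : ℝ)) ℙ)
    (C : ℤ → Ω → Set ℤ)
    (hC : ∀ i ω, C i ω = {j : ℤ | ∃ a b : ℕ,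
      (recordMap (fun l => X l ω))^[a] j = (recordMap (fun l => X l ω))^[b] i}) :
    ℙ {ω | (C 0 ω).Finite} = ℙ {ω | ∀ n : ℤ, 1 ≤ n → (C n ω).Finite} ∧
      ℙ {ω | (C 0 ω).Finite} = ℙ {ω | ∀ n : ℤ, n ≤ -1 → (C n ω).Finite} := by
  classical
  set Φ : Ω → (ℤ → ℤ) := fun ω => fun n => X n ω with hΦdef
  have hΦ : Measurable Φ := measurable_pi_lambda _ hmeas
  -- the events on Ω
  set A : ℤ → Set Ω := fun k => {ω | ∃ p : ℤ, k ≤ p ∧ RMFix (Φ ω) p} with hA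
  set B : ℤ → Set Ω := fun k => {ω | ∃ p : ℤ, p ≤ k ∧ RMFix (Φ ω) p} with hB
  -- measurability
  have hAmeas : ∀ k, MeasurableSet (A k) := by
    intro k
    have : A k = ⋃ p ∈ Set.Ici k, Φ ⁻¹' {x | RMFix x p} := by
      ext ω; simp [hA]
    rw [this]
    exact MeasurableSet.biUnion (Set.to_countable _)
      fun p _ => hΦ (rmfix_measurableSet p)
  have hBmeas : ∀ k, MeasurableSet (B k) := by
    intro k
    have : B k = ⋃ p ∈ Set.Iic k, Φ ⁻¹' {x | RMFix x p} := by
      ext ω; simp [hB]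
    rw [this]
    exact MeasurableSet.biUnion (Set.to_countable _)
      fun p _ => hΦ (rmfix_measurableSet p)
  -- stationarity: ℙ (A k) = ℙ (A 0) and ℙ (B k) = ℙ (B 0)
  have key : ∀ (S : Set (ℤ → ℤ)), MeasurableSet S → ∀ k : ℤ,
      ℙ ((fun ω => fun n : ℤ => X (n + k) ω) ⁻¹' S) = ℙ (Φ ⁻¹' S) := by
    intro S hS k
    have h1 : Measurable (fun ω => fun n : ℤ => X (n + k) ω) :=
      measurable_pi_lambda _ fun n => hmeas (n + k)
    rw [← Measure.map_apply h1 hS, ← Measure.map_apply hΦ hS, hstat k]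
  have hAeq : ∀ k : ℤ, ℙ (A k) = ℙ (A 0) := by
    intro k
    have hshift : A k = (fun ω => fun n : ℤ => X (n + k) ω) ⁻¹'
        {x : ℤ → ℤ | ∃ p : ℤ, 0 ≤ p ∧ RMFix x p} := by
      ext ω
      simp only [hA, Set.mem_setOf_eq, Set.mem_preimage]
      constructor
      · rintro ⟨p, hp, hfix⟩
        refine ⟨p - k, by omega, (rmfix_shift (fun l => X l ω) k (p - k)).mpr ?_⟩
        simpa [sub_add_cancel] using hfix
      · rintro ⟨p, hp, hfix⟩
        exact ⟨p + k, by omega, (rmfix_shift (fun l => X l ω) k p).mp hfix⟩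
    have hS : MeasurableSet {x : ℤ → ℤ | ∃ p : ℤ, 0 ≤ p ∧ RMFix x p} := by
      have : {x : ℤ → ℤ | ∃ p : ℤ, 0 ≤ p ∧ RMFix x p}
          = ⋃ p ∈ Set.Ici (0 : ℤ), {x | RMFix x p} := by
        ext x; simp
      rw [this]
      exact MeasurableSet.biUnion (Set.to_countable _) fun p _ => rmfix_measurableSet p
    have h0 : A 0 = Φ ⁻¹' {x : ℤ → ℤ | ∃ p : ℤ, 0 ≤ p ∧ RMFix x p} := by
      ext ω; simp [hA, hΦdef]
    rw [hshift, h0, key _ hS k]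
  have hBeq : ∀ k : ℤ, ℙ (B k) = ℙ (B 0) := by
    intro k
    have hshift : B k = (fun ω => fun n : ℤ => X (n + k) ω) ⁻¹'
        {x : ℤ → ℤ | ∃ p : ℤ, p ≤ 0 ∧ RMFix x p} := by
      ext ω
      simp only [hB, Set.mem_setOf_eq, Set.mem_preimage]
      constructor
      · rintro ⟨p, hp, hfix⟩
        refine ⟨p - k, by omega, (rmfix_shift (fun l => X l ω) k (p - k)).mpr ?_⟩
        simpa [sub_add_cancel] using hfix
      · rintro ⟨p, hp, hfix⟩
        exact ⟨p + k, by omega, (rmfix_shift (fun l => X l ω) k p).mp hfix⟩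
    have hS : MeasurableSet {x : ℤ → ℤ | ∃ p : ℤ, p ≤ 0 ∧ RMFix x p} := by
      have : {x : ℤ → ℤ | ∃ p : ℤ, p ≤ 0 ∧ RMFix x p}
          = ⋃ p ∈ Set.Iic (0 : ℤ), {x | RMFix x p} := by
        ext x; simp
      rw [this]
      exact MeasurableSet.biUnion (Set.to_countable _) fun p _ => rmfix_measurableSet p
    have h0 : B 0 = Φ ⁻¹' {x : ℤ → ℤ | ∃ p : ℤ, p ≤ 0 ∧ RMFix x p} := by
      ext ω; simp [hB, hΦdef]
    rw [hshift, h0, key _ hS k]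
  -- the global events
  set D : Set Ω := {ω | ∃ p : ℤ, RMFix (Φ ω) p} with hD
  set Dp : Set Ω := ⋂ k : ℤ, A k with hDp
  set Dm : Set Ω := ⋂ k : ℤ, B k with hDm
  have hAanti : Antitone A := by
    intro k k' hkk' ω hω
    obtain ⟨p, hp, hfix⟩ := hω
    exact ⟨p, hkk'.trans hp, hfix⟩
  have hBmono : Monotone B := by
    intro k k' hkk' ω hω
    obtain ⟨p, hp, hfix⟩ := hω
    exact ⟨p, hp.trans hkk', hfix⟩
  have hDA : D = ⋃ k : ℤ, A k := by
    ext ω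
    simp only [hD, Set.mem_setOf_eq, Set.mem_iUnion, hA]
    constructor
    · rintro ⟨p, hfix⟩; exact ⟨p, p, le_refl p, hfix⟩
    · rintro ⟨k, p, _, hfix⟩; exact ⟨p, hfix⟩
  have hDB : D = ⋃ k : ℤ, B k := by
    ext ω
    simp only [hD, Set.mem_setOf_eq, Set.mem_iUnion, hB]
    constructor
    · rintro ⟨p, hfix⟩; exact ⟨p, p, le_refl p, hfix⟩
    · rintro ⟨k, p, _, hfix⟩; exact ⟨p, hfix⟩
  -- measures
  have hDmeasA : ℙ D = ℙ (A 0) := by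
    rw [hDA, hAanti.measure_iUnion]
    simp [hAeq]
  have hDpmeas : ℙ Dp = ℙ (A 0) := by
    rw [hDp, hAanti.measure_iInter (fun k => (hAmeas k).nullMeasurableSet)
      ⟨0, measure_ne_top _ _⟩]
    simp [hAeq]
  have hDmeasB : ℙ D = ℙ (B 0) := by
    rw [hDB, hBmono.measure_iUnion]
    simp [hBeq]
  have hDmmeas : ℙ Dm = ℙ (B 0) := by
    rw [hDm, hBmono.measure_iInter (fun k => (hBmeas k).nullMeasurableSet)
      ⟨0, measure_ne_top _ _⟩]
    simp [hBeq]
  -- ℙ (Dp ∩ Dm) = ℙ D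
  have hsub_pD : Dp ⊆ D := by
    intro ω hω
    have := Set.mem_iInter.mp hω 0
    obtain ⟨p, _, hfix⟩ := this
    exact ⟨p, hfix⟩
  have hsub_mD : Dm ⊆ D := by
    intro ω hω
    have := Set.mem_iInter.mp hω 0
    obtain ⟨p, _, hfix⟩ := this
    exact ⟨p, hfix⟩
  have hinter : ℙ (Dp ∩ Dm) = ℙ D := by
    have hU : ℙ (Dp ∪ Dm) = ℙ D := by
      apply le_antisymm
      · exact measure_mono (Set.union_subset hsub_pD hsub_mD)
      · rw [hDmeasA, ← hDpmeas]
        exact measure_mono Set.subset_union_left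
    have hDmMS : MeasurableSet Dm := MeasurableSet.iInter hBmeas
    have hsum := measure_union_add_inter (μ := ℙ) Dp hDmMS
    -- hsum : ℙ (Dp ∪ Dm) + ℙ (Dp ∩ Dm) = ℙ Dp + ℙ Dm
    rw [hU, hDpmeas, hDmmeas, ← hDmeasA, ← hDmeasB] at hsum
    have hfin : ℙ D ≠ ⊤ := measure_ne_top _ _
    exact (ENNReal.add_right_inj hfin).mp hsum
  -- sandwich for each of the three events
  have sandwich : ∀ T : Set Ω, Dp ∩ Dm ⊆ T → T ⊆ D → ℙ T = ℙ D := by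
    intro T h1 h2
    refine le_antisymm (measure_mono h2) ?_
    calc ℙ D = ℙ (Dp ∩ Dm) := hinter.symm
      _ ≤ ℙ T := measure_mono h1
  -- the deterministic inclusions
  have hfin_all : ∀ ω ∈ Dp ∩ Dm, ∀ n : ℤ, (C n ω).Finite := by
    rintro ω ⟨hωp, hωm⟩ n
    obtain ⟨q, hq1, hq2⟩ := Set.mem_iInter.mp hωp n
    obtain ⟨q', hq'1, hq'2⟩ := Set.mem_iInter.mp hωm (n - 1)
    rw [hC]
    exact component_finite hq2 hq1 hq'2 (by omega)
  have hinf_all : ∀ ω, ω ∉ D → ∀ n : ℤ, (C n ω).Infinite := by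
    intro ω hω n
    have hnofix : ∀ p : ℤ, ¬ RMFix (Φ ω) p := by
      intro p hfix
      exact hω ⟨p, hfix⟩
    rw [hC]
    exact component_infinite hnofix n
  have e0 : ℙ {ω | (C 0 ω).Finite} = ℙ D := by
    apply sandwich
    · intro ω hω; exact hfin_all ω hω 0
    · intro ω hω
      by_contra hωD
      exact (hinf_all ω hωD 0) hω
  have e1 : ℙ {ω | ∀ n : ℤ, 1 ≤ n → (C n ω).Finite} = ℙ D := by
    apply sandwich
    · intro ω hω n _; exact hfin_all ω hω n
    · intro ω hω
      by_contra hωD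
      exact (hinf_all ω hωD 1) (hω 1 le_rfl)
  have e2 : ℙ {ω | ∀ n : ℤ, n ≤ -1 → (C n ω).Finite} = ℙ D := by
    apply sandwich
    · intro ω hω n _; exact hfin_all ω hω n
    · intro ω hω
      by_contra hωD
      exact (hinf_all ω hωD (-1)) (hω (-1) le_rfl)
  exact ⟨e0.trans e1.symm, e0.trans e2.symm⟩
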